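/- Let M be a finite monoid such that ab = b for all a, b ∈ M with b ≠ 1. Let U be a compact right topological semigroup on which M acts by continuous endomorphisms. Then all elements a ∈ M with a ≠ 1 have the same image a(U) ⊆ U, and this common image T is a compact subsemigroup of U on which every element of M acts as the identity. -/
import Mathlib


/-- For a finite monoid `M` with `ab = b` whenever `b ≠ 1`, acting
by continuous endomorphisms `φ` on a compact right topological semigroup `U`:
all `a ≠ 1` have the same image `T = a(U)`, and `T` is a compact subsemigroup
of `U` on which every element of `M` acts as the identity. -/
theorem stmt_9 (M U : Type*) [Monoid M] [Finite M]
    [Semigroup U] [TopologicalSpace U] [CompactSpace U]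
    (hrt : ∀ u : U, Continuous (· * u))
    (hM : ∀ a b : M, b ≠ 1 → a * b = b)
    (φ : M → U → U) (hcont : ∀ a, Continuous (φ a))
    (hend : ∀ a u v, φ a (u * v) = φ a u * φ a v)
    (hone : ∀ u, φ 1 u = u) (hact : ∀ a b u, φ (a * b) u = φ a (φ b u)) :
    (∀ a b : M, a ≠ 1 → b ≠ 1 → Set.range (φ a) = Set.range (φ b)) ∧
    ∀ a : M, a ≠ 1 →
      IsCompact (Set.range (φ a)) ∧
      (∀ u v : U, u ∈ Set.range (φ a) → v ∈ Set.range (φ a) →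
        u * v ∈ Set.range (φ a)) ∧
      (∀ c : M, ∀ u ∈ Set.range (φ a), φ c u = u) := by
  -- every `φ c` fixes points of `range (φ a)` for `a ≠ 1`
  have hfix : ∀ (a : M), a ≠ 1 → ∀ (c : M), ∀ u ∈ Set.range (φ a), φ c u = u := by
    rintro a ha c u ⟨v, rfl⟩
    rw [← hact, hM c a ha]
  have hsub : ∀ a b : M, a ≠ 1 → b ≠ 1 → Set.range (φ a) ⊆ Set.range (φ b) := by
    rintro a b ha hb u hu
    exact ⟨u, hfix a ha b u hu⟩
  refine ⟨fun a b ha hb => Set.Subset.antisymm (hsub a b ha hb) (hsub b a hb ha),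
    fun a ha => ⟨?_, ?_, hfix a ha⟩⟩
  · exact isCompact_range (hcont a)
  · rintro u v ⟨x, rfl⟩ ⟨y, rfl⟩
    exact ⟨x * y, hend a x y⟩
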